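/- Let X be an infinite-dimensional normed vector space over ℝ or ℂ, let r > 0, and let S = { x ∈ X : ‖x‖ = r }. If (K_n)_{n∈ℕ} is a countable family of compact subsets of S, then the union ⋃_{n∈ℕ} K_n has empty interior in the relative topology of S. In particular, every compact subset of S has empty interior in S. -/

import Mathlib

open MeasureTheory Real Set
open scoped ENNReal ComplexConjugate

noncomputable section

abbrev Rd (d : ℕ) := EuclideanSpace ℝ (Fin d)
abbrev Ltwo (d : ℕ) := MeasureTheory.Lp ℂ 2 (volume : MeasureTheory.Measure (Rd d))
abbrev LoneR (d : ℕ) := MeasureTheory.Lp ℝ 1 (volume : MeasureTheory.Measure (Rd d))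
abbrev LoneC (d : ℕ) := MeasureTheory.Lp ℂ 1 (volume : MeasureTheory.Measure (Rd d))
abbrev timeMeasure (a b : ℝ) : MeasureTheory.Measure ℝ := volume.restrict (Set.Icc a b)

/-- `M^p([a,b])`: the dual of the Bochner space `L^{p'}([a,b], L¹(ℝ^d;ℝ))`,
where `q = p'` is the conjugate exponent of `p`. -/
abbrev Mp (d : ℕ) (q : ℝ≥0∞) [Fact (1 ≤ q)] (a b : ℝ) :=
  StrongDual ℝ (MeasureTheory.Lp (LoneR d) q (timeMeasure a b))

/-- `U` is the free Schrödinger group `t ↦ e^{itΔ}` on `L²(ℝ^d;ℂ)`: it is characterized as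
the family of unitaries acting on (L²-classes of) Schwartz functions as the Fourier multiplier
with symbol `e^{-it|ξ|²}` (in Mathlib's `2π`-convention for the Fourier transform, the symbol
reads `e^{-4π²it‖ξ‖²}`). -/
def IsSchrodingerGroup (d : ℕ) (U : ℝ → (Ltwo d ≃ₗᵢ[ℂ] Ltwo d)) : Prop :=
  ∀ (t : ℝ) (φ ψ : SchwartzMap (Rd d) ℂ),
    (∀ ξ : Rd d, FourierTransform.fourierCLE ℂ (SchwartzMap (Rd d) ℂ) ψ ξ
        = Complex.exp (-Complex.I * (t : ℂ) * ((4 * π ^ 2 * ‖ξ‖ ^ 2 : ℝ) : ℂ))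
          * FourierTransform.fourierCLE ℂ (SchwartzMap (Rd d) ℂ) φ ξ) →
    ∀ (u v : Ltwo d), (⇑u =ᵐ[volume] ⇑φ) → (⇑v =ᵐ[volume] ⇑ψ) → U t u = v

/-- `w = ∫_J f(s) V(ds)`, defined by duality:
`⟪g, w⟫ = ⟨V, s ↦ 1_J(s) · conj(g)·f(s)⟩` for every `g ∈ L²`, the (real) functional `V`
being applied separately to the real and imaginary parts. -/
def IsDualityIntegralOn (d : ℕ) (q : ℝ≥0∞) [Fact (1 ≤ q)] (a b : ℝ)
    (V : Mp d q a b) (J : Set ℝ) (f : ℝ → Ltwo d) (w : Ltwo d) : Prop :=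
  ∀ g : Ltwo d, ∃ Fre Fim : MeasureTheory.Lp (LoneR d) q (timeMeasure a b),
    (∀ᵐ s ∂(timeMeasure a b), ⇑(Fre s)
        =ᵐ[volume] fun x => J.indicator
          (fun s' => ((starRingEnd ℂ) (g x) * (f s' : Rd d → ℂ) x).re) s) ∧
    (∀ᵐ s ∂(timeMeasure a b), ⇑(Fim s)
        =ᵐ[volume] fun x => J.indicator
          (fun s' => ((starRingEnd ℂ) (g x) * (f s' : Rd d → ℂ) x).im) s) ∧
    (inner ℂ g w : ℂ) = ((V Fre : ℝ) : ℂ) + Complex.I * ((V Fim : ℝ) : ℂ)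

/-- `ψ` is a mild solution of the Schrödinger equation with potential `V ∈ M^p([a,b])`
and initial condition `ψ₀`:  `ψ(t) = e^{itΔ}ψ₀ + ∫₀ᵗ e^{i(t-s)Δ} ψ(s) V(ds)` for all `t`,
the integral being understood by duality and oriented (`∫₀ᵗ = -∫ₜ⁰` for `t < 0`). -/
def IsMildSolution (d : ℕ) (U : ℝ → (Ltwo d ≃ₗᵢ[ℂ] Ltwo d)) (q : ℝ≥0∞) [Fact (1 ≤ q)]
    (a b : ℝ) (hab : a ≤ b) (V : Mp d q a b) (ψ₀ : Ltwo d)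
    (ψ : C(Set.Icc a b, Ltwo d)) : Prop :=
  ∀ t : Set.Icc a b, ∃ w : Ltwo d,
    IsDualityIntegralOn d q a b V (Set.uIcc 0 (t : ℝ))
      (fun s => U ((t : ℝ) - s) (Set.IccExtend hab ψ s)) w ∧
    ψ t = U (t : ℝ) ψ₀ + (if (0:ℝ) ≤ (t : ℝ) then (1 : ℂ) else -1) • w

/-- `F = L_I(f,g) V`, i.e. `F(s) = conj(g(s)) · ∫_I e^{i(s-s')Δ} f(s') V(ds')` for a.e. `s ∈ I`,
`I = [a,b]`. -/
def IsLopValue (d : ℕ) (U : ℝ → (Ltwo d ≃ₗᵢ[ℂ] Ltwo d)) (q : ℝ≥0∞) [Fact (1 ≤ q)]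
    (a b : ℝ) (f g : ℝ → Ltwo d) (V : Mp d q a b)
    (F : MeasureTheory.Lp (LoneC d) q (timeMeasure a b)) : Prop :=
  ∀ᵐ s ∂(timeMeasure a b), ∃ w : Ltwo d,
    IsDualityIntegralOn d q a b V (Set.Icc a b) (fun s' => U (s - s') (f s')) w ∧
    ⇑(F s) =ᵐ[volume]
      fun x => (starRingEnd ℂ) ((g s : Rd d → ℂ) x) * (w : Rd d → ℂ) x

/-- The squared modulus `|u|² ∈ L¹(ℝ^d;ℝ)` of `u ∈ L²(ℝ^d;ℂ)`. -/
def sqModulus (d : ℕ) (u : Ltwo d) : LoneR d :=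
  MeasureTheory.MemLp.toLp _
    ((MeasureTheory.Lp.memLp u).norm_rpow (by norm_num) (by norm_num))

/-- A potential in `M^p_loc(ℝ)`: a compatible family of elements of `M^p(I)` for all compact
intervals `I = [a,b]`, i.e. the functional on a larger interval agrees with the one on a smaller
interval when applied to (test functions vanishing outside the smaller interval). -/
structure MlocFamily (d : ℕ) (q : ℝ≥0∞) [Fact (1 ≤ q)] where
  toFun : ∀ a b : ℝ, Mp d q a b
  compat : ∀ (a b a' b' : ℝ), a' ≤ a → b ≤ b' →
    ∀ (F : MeasureTheory.Lp (LoneR d) q (timeMeasure a b))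
      (F' : MeasureTheory.Lp (LoneR d) q (timeMeasure a' b')),
      (∀ᵐ s ∂(volume : MeasureTheory.Measure ℝ),
          (s ∈ Set.Icc a b → F s = F' s) ∧
          (s ∈ Set.Icc a' b' ∧ s ∉ Set.Icc a b → F' s = 0)) →
      toFun a b F = toFun a' b' F'



/-- In an infinite-dimensional normed space over `ℝ` or `ℂ`, a compact subset of a sphere of
positive radius has empty interior in the relative topology of the sphere. -/
lemma aux_compact_interior_empty (𝕜 : Type*) [RCLike 𝕜] (X : Type*) [NormedAddCommGroup X]
    [NormedSpace 𝕜 X] (hinf : ¬FiniteDimensional 𝕜 X) (r : ℝ) (hr : 0 < r)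
    {K' : Set ↥(Metric.sphere (0 : X) r)} (hK' : IsCompact K') : interior K' = ∅ := by
  by_contra h
  obtain ⟨x, hx⟩ := Set.nonempty_iff_ne_empty.mpr h
  obtain ⟨ε, hε, hball⟩ := Metric.mem_nhds_iff.mp (mem_interior_iff_mem_nhds.mp hx)
  set δ : ℝ := min (ε / 2) (r / 2) with hδdef
  have hδ : 0 < δ := lt_min (by linarith) (by linarith)
  have hδε : 2 * δ ≤ ε := by
    have := min_le_left (ε / 2) (r / 2); linarith
  have hδr : δ ≤ r / 2 := min_le_right _ _
  -- the truncated cone over K'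
  set C : Set X := (fun p : ℝ × ↥(Metric.sphere (0 : X) r) =>
      ((p.1 : 𝕜) • (p.2 : X))) '' (Set.Icc (1/2 : ℝ) (3/2) ×ˢ K') with hCdef
  have hC : IsCompact C := by
    apply (isCompact_Icc.prod hK').image
    exact (RCLike.continuous_ofReal.comp continuous_fst).smul
      (continuous_subtype_val.comp continuous_snd)
  have hxnorm : ‖(x : X)‖ = r := mem_sphere_zero_iff_norm.mp x.2
  -- the ball of radius δ around x is contained in C
  have hsub : Metric.ball (x : X) δ ⊆ C := by
    intro z hz
    rw [Metric.mem_ball, dist_eq_norm] at hz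
    have hznr : |‖z‖ - r| < δ := by
      calc |‖z‖ - r| = |‖z‖ - ‖(x : X)‖| := by rw [hxnorm]
        _ ≤ ‖z - (x : X)‖ := abs_norm_sub_norm_le _ _
        _ < δ := hz
    have h1 : r / 2 < ‖z‖ := by
      have := abs_lt.mp hznr; linarith [hδr]
    have h2 : ‖z‖ < 3 * r / 2 := by
      have := abs_lt.mp hznr; linarith [hδr]
    have hzpos : 0 < ‖z‖ := by linarith
    set y : X := ((r / ‖z‖ : ℝ) : 𝕜) • z with hydef
    have hynorm : ‖y‖ = r := by
      rw [hydef, norm_smul, RCLike.norm_ofReal, abs_of_pos (div_pos hr hzpos)]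
      field_simp
    have hy : y ∈ Metric.sphere (0 : X) r := mem_sphere_zero_iff_norm.mpr hynorm
    have hyx : ‖y - (x : X)‖ < ε := by
      have hyz : ‖y - z‖ < δ := by
        have : y - z = (((r / ‖z‖ - 1 : ℝ)) : 𝕜) • z := by
          rw [hydef]; push_cast; rw [sub_smul, one_smul]
        rw [this, norm_smul, RCLike.norm_ofReal]
        have : |r / ‖z‖ - 1| * ‖z‖ = |r - ‖z‖| := by
          rw [show r / ‖z‖ - 1 = (r - ‖z‖) / ‖z‖ by field_simp, abs_div, abs_of_pos hzpos,
            div_mul_cancel₀ _ (ne_of_gt hzpos)]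
        rw [this, abs_sub_comm]
        exact hznr
      calc ‖y - (x : X)‖ ≤ ‖y - z‖ + ‖z - (x : X)‖ := norm_sub_le_norm_sub_add_norm_sub _ _ _
        _ < δ + δ := add_lt_add hyz hz
        _ ≤ ε := by linarith
    have hymem : (⟨y, hy⟩ : ↥(Metric.sphere (0 : X) r)) ∈ K' := by
      apply hball
      rw [Metric.mem_ball, Subtype.dist_eq, dist_eq_norm]
      exact hyx
    refine ⟨(‖z‖ / r, ⟨y, hy⟩), ⟨?_, hymem⟩, ?_⟩
    · constructor
      · rw [le_div_iff₀ hr]; linarith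
      · rw [div_le_iff₀ hr]; linarith
    · show ((‖z‖ / r : ℝ) : 𝕜) • y = z
      rw [hydef, smul_smul, ← RCLike.ofReal_mul]
      have : ‖z‖ / r * (r / ‖z‖) = 1 := by field_simp
      rw [this, RCLike.ofReal_one, one_smul]
  -- a compact closed ball gives finite dimension, contradiction
  have hcb : IsCompact (Metric.closedBall (x : X) (δ / 2)) := by
    apply hC.of_isClosed_subset Metric.isClosed_closedBall
    exact (Metric.closedBall_subset_ball (by linarith)).trans hsub
  exact hinf (FiniteDimensional.of_isCompact_closedBall 𝕜 (by linarith : (0:ℝ) < δ / 2) hcb)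

/-- In an infinite-dimensional Banach space `X` (over `ℝ` or `ℂ`), any
countable union of compact subsets of the sphere `S = {x : ‖x‖ = r}` (`r > 0`) has empty
interior in the relative topology of `S`; in particular, every compact subset of `S` has
empty interior in `S`. -/
theorem statement12 (𝕜 : Type*) [RCLike 𝕜] (X : Type*) [NormedAddCommGroup X]
    [NormedSpace 𝕜 X] [CompleteSpace X] (hinf : ¬FiniteDimensional 𝕜 X)
    (r : ℝ) (hr : 0 < r)
    (K : ℕ → Set ↥(Metric.sphere (0 : X) r)) (hK : ∀ n, IsCompact (K n)) :
    interior (⋃ n, K n) = ∅ ∧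
    ∀ K' : Set ↥(Metric.sphere (0 : X) r), IsCompact K' → interior K' = ∅ := by
  haveI : CompleteSpace ↥(Metric.sphere (0 : X) r) :=
    (Metric.isClosed_sphere).completeSpace_coe
  have haux : ∀ K' : Set ↥(Metric.sphere (0 : X) r), IsCompact K' → interior K' = ∅ :=
    fun K' hK' => aux_compact_interior_empty 𝕜 X hinf r hr hK'
  refine ⟨?_, haux⟩
  have hmeagre : IsMeagre (⋃ n, K n) := by
    apply isMeagre_iUnion
    intro n
    have hclosed : IsClosed (K n) := (hK n).isClosed
    exact residual_of_dense_open hclosed.isOpen_compl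
      (interior_eq_empty_iff_dense_compl.mp (haux _ (hK n)))
  exact interior_eq_empty_iff_dense_compl.mpr (dense_of_mem_residual hmeagre)


end
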